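/- Let 1 < q < ∞ and α > 0, and let a be a T^{1,q}(γ) α-atom. Then ∫_{ℝⁿ} ( ∬_D 1_{B(y,t)}(x) · γ(B(y,t))^{−1} · |a(y,t)|^q dγ(y) dt/t )^{1/q} dγ(x) ≤ 1. -/

import Mathlib

open MeasureTheory Metric Set
open scoped ENNReal

noncomputable section

/-- Euclidean space ℝⁿ. -/
abbrev E (n : ℕ) := EuclideanSpace ℝ (Fin n)

/-- The standard Gaussian measure on ℝⁿ. -/
def gaussianM (n : ℕ) : Measure (E n) :=
  volume.withDensity
    (fun x => ENNReal.ofReal ((2 * Real.pi) ^ (-(n : ℝ) / 2) * Real.exp (-‖x‖ ^ 2 / 2)))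

/-- m(x) = min {1, 1/|x|} (with value 1 at x = 0). -/
def mFun {n : ℕ} (x : E n) : ℝ := if ‖x‖ ≤ 1 then 1 else ‖x‖⁻¹

/-- The measure `dt/t` on `(0,∞)`. -/
def tMeasure : Measure ℝ :=
  (volume.restrict (Set.Ioi (0 : ℝ))).withDensity fun t => ENNReal.ofReal t⁻¹

/-- The admissible region `D = {(x,t) : 0 < t < m(x)}`. -/
def Dset (n : ℕ) : Set (E n × ℝ) := {p | 0 < p.2 ∧ p.2 < mFun p.1}

/-- The measure `dγ(y) dt/t` on `D`. -/
def DMeasure (n : ℕ) : Measure (E n × ℝ) := ((gaussianM n).prod tMeasure).restrict (Dset n)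

/-- The tent with aperture `α` over `A`: `{(y,t) : t > 0, d(y, ∁A) ≥ α t}`. -/
def tentSet (n : ℕ) (α : ℝ) (A : Set (E n)) : Set (E n × ℝ) :=
  {p | 0 < p.2 ∧ α * p.2 ≤ infDist p.1 Aᶜ}

/-- A `T^{1,q}(γ)` `α`-atom: a measurable function supported in `T_1(B) ∩ D` for some
ball `B ∈ 𝓑_α`, with `‖a‖_{L^q(D, dγ dt/t)} ≤ γ(B)^{-1/q'}` where `1/q' = 1 - 1/q`. -/
def IsTAtom (n : ℕ) (q α : ℝ) (a : E n × ℝ → ℂ) : Prop :=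
  Measurable a ∧
  ∃ (c : E n) (r : ℝ), 0 ≤ r ∧ r ≤ α * mFun c ∧
    (∀ p, p ∉ tentSet n 1 (ball c r) ∩ Dset n → a p = 0) ∧
    (∫⁻ p, (‖a p‖₊ : ℝ≥0∞) ^ q ∂(DMeasure n)) ^ (1 / q) ≤
      gaussianM n (ball c r) ^ (-(1 - 1 / q))

instance (n : ℕ) : SigmaFinite (gaussianM n) := by unfold gaussianM; infer_instance
instance : SigmaFinite tMeasure := by unfold tMeasure; infer_instance
instance (n : ℕ) : SigmaFinite (DMeasure n) := by unfold DMeasure; infer_instance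

lemma dens_meas (n : ℕ) : Measurable fun x : E n =>
    ENNReal.ofReal ((2 * Real.pi) ^ (-(n : ℝ) / 2) * Real.exp (-‖x‖ ^ 2 / 2)) := by
  fun_prop

lemma gaussianM_apply {n : ℕ} {s : Set (E n)} (hs : MeasurableSet s) :
    gaussianM n s = ∫⁻ x in s,
      ENNReal.ofReal ((2 * Real.pi) ^ (-(n : ℝ) / 2) * Real.exp (-‖x‖ ^ 2 / 2)) ∂volume := by
  rw [gaussianM, withDensity_apply _ hs]

lemma gauss_ball_lt_top {n : ℕ} (x : E n) (t : ℝ) : gaussianM n (ball x t) < ∞ := by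
  rw [gaussianM_apply measurableSet_ball]
  calc ∫⁻ y in ball x t,
      ENNReal.ofReal ((2 * Real.pi) ^ (-(n : ℝ) / 2) * Real.exp (-‖y‖ ^ 2 / 2)) ∂volume
      ≤ ∫⁻ _ in ball x t, ENNReal.ofReal ((2 * Real.pi) ^ (-(n : ℝ) / 2)) ∂volume := by
        apply lintegral_mono
        intro y
        apply ENNReal.ofReal_le_ofReal
        have h1 : Real.exp (-‖y‖ ^ 2 / 2) ≤ 1 := by
          rw [Real.exp_le_one_iff]
          nlinarith [sq_nonneg ‖y‖]
        have h2 : (0:ℝ) < (2 * Real.pi) ^ (-(n : ℝ) / 2) := by positivity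
        nlinarith
    _ = ENNReal.ofReal ((2 * Real.pi) ^ (-(n : ℝ) / 2)) * volume (ball x t) := by
        rw [setLIntegral_const]
    _ < ∞ := ENNReal.mul_lt_top ENNReal.ofReal_lt_top measure_ball_lt_top

lemma gauss_ball_pos {n : ℕ} (x : E n) {t : ℝ} (ht : 0 < t) : 0 < gaussianM n (ball x t) := by
  rw [pos_iff_ne_zero]
  intro h
  rw [gaussianM_apply measurableSet_ball, lintegral_eq_zero_iff (dens_meas n)] at h
  have hF : ∀ᵐ y ∂(volume.restrict (ball x t)), False := by
    refine h.mono fun y hy => ?_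
    have hpos : (0:ℝ) < (2 * Real.pi) ^ (-(n : ℝ) / 2) * Real.exp (-‖y‖ ^ 2 / 2) := by positivity
    simp only [Pi.zero_apply, ENNReal.ofReal_eq_zero] at hy
    linarith
  have h2 : volume (ball x t) = 0 := by
    simpa [ae_iff, Measure.restrict_apply_univ] using hF
  exact absurd h2 (measure_ball_pos volume x ht).ne'

lemma meas_gauss_ball (n : ℕ) :
    Measurable fun p : E n × ℝ => gaussianM n (ball p.1 p.2) := by
  have hS : MeasurableSet {z : (E n × ℝ) × E n | dist z.2 z.1.1 < z.1.2} := by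
    apply IsOpen.measurableSet
    exact isOpen_lt (continuous_snd.dist (continuous_fst.fst)) continuous_fst.snd
  have h := measurable_measure_prodMk_left (ν := gaussianM n) hS
  have heq : (fun p : E n × ℝ => gaussianM n (ball p.1 p.2)) =
      fun p => gaussianM n (Prod.mk p ⁻¹' {z : (E n × ℝ) × E n | dist z.2 z.1.1 < z.1.2}) := by
    rfl
  rw [heq]
  exact h


/-- Every `T^{1,q}(γ)` `α`-atom `a` satisfies `‖a‖_{T^{1,q}(γ)} ≤ 1`. -/
theorem stmt10 (n : ℕ) (hn : 1 ≤ n) (q α : ℝ) (hq : 1 < q) (hα : 0 < α)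
    (a : E n × ℝ → ℂ) (ha : IsTAtom n q α a) :
    ∫⁻ x, (∫⁻ p, (ball p.1 p.2).indicator (fun _ => (gaussianM n (ball p.1 p.2))⁻¹) x *
        (‖a p‖₊ : ℝ≥0∞) ^ q ∂(DMeasure n)) ^ (1 / q) ∂(gaussianM n) ≤ 1 := by
  obtain ⟨hameas, c, r, hr0, hrα, hsupp, hnorm⟩ := ha
  have hq0 : (0:ℝ) < q := lt_trans one_pos hq
  have h1q : (0:ℝ) < 1 / q := by positivity
  set γ := gaussianM n with hγdef
  set B := ball c r with hBdef
  set F : E n × ℝ → E n → ℝ≥0∞ := fun p x =>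
    (ball p.1 p.2).indicator (fun _ => (gaussianM n (ball p.1 p.2))⁻¹) x *
      (‖a p‖₊ : ℝ≥0∞) ^ q with hFdef
  set J : E n → ℝ≥0∞ := fun x => ∫⁻ p, F p x ∂(DMeasure n) with hJdef
  show ∫⁻ x, (J x) ^ (1 / q) ∂γ ≤ 1
  -- the key support information
  have hkey : ∀ p : E n × ℝ, a p ≠ 0 → 0 < p.2 ∧ ball p.1 p.2 ⊆ B := by
    intro p hap
    have hp : p ∈ tentSet n 1 B ∩ Dset n := by
      by_contra hc
      exact hap (hsupp p hc)
    obtain ⟨⟨hpt, hpd⟩, -⟩ := hp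
    refine ⟨hpt, fun y hy => ?_⟩
    by_contra hyB
    have h1 : infDist p.1 Bᶜ ≤ dist p.1 y := infDist_le_dist_of_mem hyB
    have h2 : dist y p.1 < p.2 := mem_ball.mp hy
    rw [one_mul] at hpd
    rw [dist_comm] at h2
    linarith
  -- measurability of the full integrand on the product
  have hSmeas : MeasurableSet {z : (E n × ℝ) × E n | dist z.2 z.1.1 < z.1.2} := by
    apply IsOpen.measurableSet
    exact isOpen_lt (continuous_snd.dist (continuous_fst.fst)) continuous_fst.snd
  set G : (E n × ℝ) × E n → ℝ≥0∞ := fun z =>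
    ({z : (E n × ℝ) × E n | dist z.2 z.1.1 < z.1.2}).indicator 1 z *
      ((gaussianM n (ball z.1.1 z.1.2))⁻¹ * (‖a z.1‖₊ : ℝ≥0∞) ^ q) with hGdef
  have hGmeas : Measurable G := by
    refine (measurable_one.indicator hSmeas).mul ?_
    refine (((meas_gauss_ball n).comp measurable_fst).inv).mul ?_
    exact ((hameas.comp measurable_fst).nnnorm.coe_nnreal_ennreal).pow_const q
  have hFG : ∀ p x, F p x = G (p, x) := by
    intro p x
    by_cases hx : x ∈ ball p.1 p.2
    · have hmem : ((p, x) : (E n × ℝ) × E n) ∈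
        {z : (E n × ℝ) × E n | dist z.2 z.1.1 < z.1.2} := mem_ball.mp hx
      simp [hFdef, hGdef, indicator_of_mem hx, indicator_of_mem hmem]
    · have hmem : ((p, x) : (E n × ℝ) × E n) ∉
        {z : (E n × ℝ) × E n | dist z.2 z.1.1 < z.1.2} := fun h => hx (mem_ball.mpr h)
      simp [hFdef, hGdef, indicator_of_notMem hx, indicator_of_notMem hmem]
  have hJmeas : Measurable J := by
    have h1 : Measurable fun x : E n => ∫⁻ p, G (p, x) ∂(DMeasure n) :=
      hGmeas.lintegral_prod_left'
    have : J = fun x => ∫⁻ p, G (p, x) ∂(DMeasure n) :=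
      funext fun x => lintegral_congr fun p => hFG p x
    rw [this]; exact h1
  -- J vanishes off B
  have hJ0 : ∀ x ∉ B, J x = 0 := by
    intro x hx
    have hz : ∀ p, F p x = 0 := by
      intro p
      by_cases hap : a p = 0
      · simp [hFdef, hap, ENNReal.zero_rpow_of_pos hq0]
      · obtain ⟨hpt, hsub⟩ := hkey p hap
        have : x ∉ ball p.1 p.2 := fun h => hx (hsub h)
        simp [hFdef, indicator_of_notMem this]
    simp only [hJdef, hz, lintegral_zero]
  -- Fubini: the total mass of J
  have hswap : ∫⁻ x, J x ∂γ = ∫⁻ p, (‖a p‖₊ : ℝ≥0∞) ^ q ∂(DMeasure n) := by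
    have hmeas' : AEMeasurable (Function.uncurry fun (x : E n) (p : E n × ℝ) => F p x)
        (γ.prod (DMeasure n)) := by
      have : (Function.uncurry fun (x : E n) (p : E n × ℝ) => F p x) =
          G ∘ Prod.swap := by
        funext z; exact hFG z.2 z.1
      rw [this]
      exact (hGmeas.comp measurable_swap).aemeasurable
    rw [hJdef]
    rw [lintegral_lintegral_swap hmeas']
    refine lintegral_congr fun p => ?_
    have hinner : ∫⁻ x, F p x ∂γ =
        (gaussianM n (ball p.1 p.2))⁻¹ * (‖a p‖₊ : ℝ≥0∞) ^ q * gaussianM n (ball p.1 p.2) := by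
      have : ∀ x, F p x = (ball p.1 p.2).indicator
          (fun _ => (gaussianM n (ball p.1 p.2))⁻¹ * (‖a p‖₊ : ℝ≥0∞) ^ q) x := by
        intro x
        by_cases hx : x ∈ ball p.1 p.2
        · simp [hFdef, indicator_of_mem hx]
        · simp [hFdef, indicator_of_notMem hx]
      rw [lintegral_congr this, lintegral_indicator measurableSet_ball, setLIntegral_const]
    rw [hinner]
    by_cases hap : a p = 0
    · simp [hap, ENNReal.zero_rpow_of_pos hq0]
    · obtain ⟨hpt, -⟩ := hkey p hap
      have h0 : gaussianM n (ball p.1 p.2) ≠ 0 := (gauss_ball_pos p.1 hpt).ne'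
      have htop : gaussianM n (ball p.1 p.2) ≠ ∞ := (gauss_ball_lt_top p.1 p.2).ne
      rw [mul_comm ((gaussianM n (ball p.1 p.2))⁻¹) _, mul_assoc,
        ENNReal.inv_mul_cancel h0 htop, mul_one]
  -- case γ B = 0 ⇒ B empty ⇒ a ≡ 0
  by_cases hγB : γ B = 0
  · have hr : r ≤ 0 := by
      by_contra hr
      push_neg at hr
      exact absurd hγB (gauss_ball_pos c hr).ne'
    have hBe : B = ∅ := ball_eq_empty.mpr hr
    have haz : ∀ p, a p = 0 := by
      intro p
      apply hsupp
      rintro ⟨⟨hpt, hpd⟩, -⟩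
      rw [hBe] at hpd
      rw [compl_empty] at hpd
      have : infDist p.1 (univ : Set (E n)) = 0 := infDist_zero_of_mem (mem_univ _)
      rw [this, one_mul] at hpd
      linarith
    have : ∀ x, J x = 0 := by
      intro x
      have : ∀ p, F p x = 0 := fun p => by
        simp [hFdef, haz p, ENNReal.zero_rpow_of_pos hq0]
      simp only [hJdef, this, lintegral_zero]
    simp only [this, ENNReal.zero_rpow_of_pos h1q, lintegral_zero]
    exact zero_le_one
  -- main case
  have hγBtop : γ B ≠ ∞ := (gauss_ball_lt_top c r).ne
  set q' : ℝ := Real.conjExponent q with hq'def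
  have hconj : q.HolderConjugate q' := Real.HolderConjugate.conjExponent hq
  have hq'inv : 1 / q' = 1 - 1 / q := by
    have := hconj.inv_add_inv_eq_one
    rw [one_div, one_div]
    linarith
  calc ∫⁻ x, (J x) ^ (1 / q) ∂γ
      = ∫⁻ x, (J x) ^ (1 / q) * B.indicator 1 x ∂γ := by
        refine lintegral_congr fun x => ?_
        by_cases hx : x ∈ B
        · simp [indicator_of_mem hx]
        · rw [hJ0 x hx, ENNReal.zero_rpow_of_pos h1q]
          simp [indicator_of_notMem hx]
    _ ≤ (∫⁻ x, ((J x) ^ (1 / q)) ^ q ∂γ) ^ (1 / q) *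
        (∫⁻ x, (B.indicator 1 x) ^ q' ∂γ) ^ (1 / q') := by
        have := ENNReal.lintegral_mul_le_Lp_mul_Lq γ hconj
          (f := fun x => (J x) ^ (1 / q)) (g := fun x => B.indicator 1 x)
          ((hJmeas.pow_const _).aemeasurable)
          ((measurable_one.indicator measurableSet_ball).aemeasurable)
        simpa [Pi.mul_apply] using this
    _ = (∫⁻ x, J x ∂γ) ^ (1 / q) * (γ B) ^ (1 / q') := by
        congr 1
        · congr 1
          refine lintegral_congr fun x => ?_
          rw [← ENNReal.rpow_mul, one_div_mul_cancel hq0.ne', ENNReal.rpow_one]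
        · congr 1
          have : ∀ x, (B.indicator 1 x : ℝ≥0∞) ^ q' = B.indicator 1 x := by
            intro x
            by_cases hx : x ∈ B
            · simp [indicator_of_mem hx]
            · simp [indicator_of_notMem hx, ENNReal.zero_rpow_of_pos hconj.symm.pos]
          rw [lintegral_congr this, lintegral_indicator_one measurableSet_ball]
    _ ≤ (γ B) ^ (-(1 - 1 / q)) * (γ B) ^ (1 - 1 / q) := by
        rw [hswap, hq'inv]
        exact mul_le_mul_left hnorm _
    _ = 1 := by
        rw [ENNReal.rpow_neg]
        refine ENNReal.inv_mul_cancel ?_ ?_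
        · exact (ENNReal.rpow_pos (pos_iff_ne_zero.mpr hγB) hγBtop).ne'
        · have h1 : 1 / q ≤ 1 := by
            rw [div_le_one hq0]; linarith
          exact ENNReal.rpow_ne_top_of_nonneg (by linarith) hγBtop
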